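/- In the NOT-gadget economy, if p*_{1-x} < 1 - p*_x, then all n_x dedicated students can afford the bundle {c_x, c_{1-x}} (since every budget is at least 1), hence course c_{1-x} is oversubscribed by at least n_x/2, so ‖z‖₂ ≥ n_x/2 > α, contradicting the (α,β)-CEEI conditions when n_x > 4α. -/

import Mathlib

open Finset

/-- An economy: course capacities and, for each student, an ordered list
(most preferred first) of permissible course bundles. -/
structure Econ (N M : ℕ) where
  q : Fin M → ℕ
  pref : Fin N → List (Finset (Fin M))

/-- Total price of a bundle. -/
def cost {M : ℕ} (p : Fin M → ℝ) (S : Finset (Fin M)) : ℝ := ∑ j ∈ S, p j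

/-- `Chooses p bdg l S`: `S` is the most preferred affordable bundle in the
ordered list `l` (most preferred first) at prices `p` with budget `bdg`
(`S = ∅` if no listed bundle is affordable). -/
def Chooses {M : ℕ} (p : Fin M → ℝ) (bdg : ℝ) (l : List (Finset (Fin M)))
    (S : Finset (Fin M)) : Prop :=
  (S = ∅ ∧ ∀ T ∈ l, ¬ cost p T ≤ bdg) ∨
  (S ∈ l ∧ cost p S ≤ bdg ∧ ∀ T ∈ l.take (l.idxOf S), ¬ cost p T ≤ bdg)

/-- Number of students enrolled in course `j`. -/
def enroll {N M : ℕ} (x : Fin N → Finset (Fin M)) (j : Fin M) : ℕ :=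
  (univ.filter fun i => j ∈ x i).card

/-- Clearing error of course `j`: oversubscription always counts; for a
positively priced course undersubscription counts as well. -/
noncomputable def zerr {N M : ℕ} (E : Econ N M) (p : Fin M → ℝ) (x : Fin N → Finset (Fin M))
    (j : Fin M) : ℝ :=
  if 0 < p j then (enroll x j : ℝ) - E.q j
  else max ((enroll x j : ℝ) - E.q j) 0

/-- L2 norm of the clearing-error vector. -/
noncomputable def clearErr {N M : ℕ} (E : Econ N M) (p : Fin M → ℝ)
    (x : Fin N → Finset (Fin M)) : ℝ :=
  Real.sqrt (∑ j, (zerr E p x j) ^ 2)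

/-- An `(α,β)`-CEEI: nonnegative prices, budgets in `[1,1+β]`, every student
is allocated her most preferred affordable bundle, and the total clearing
error is at most `α`. -/
structure IsCEEI {N M : ℕ} (E : Econ N M) (α β : ℝ) (p : Fin M → ℝ)
    (b : Fin N → ℝ) (x : Fin N → Finset (Fin M)) : Prop where
  price_nonneg : ∀ j, 0 ≤ p j
  budget : ∀ i, 1 ≤ b i ∧ b i ≤ 1 + β
  alloc : ∀ i, Chooses p (b i) (E.pref i) (x i)
  clearing : clearErr E p x ≤ α

/-- Student `i` is interested in course `j` (lists some bundle containing it). -/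
def Interested {N M : ℕ} (E : Econ N M) (j : Fin M) (i : Fin N) : Prop :=
  ∃ S ∈ E.pref i, j ∈ S

/-- **NOT gadget, underpriced case.** In the NOT-gadget economy, if
`p cout < 1 - p cx`, then all `nx` dedicated students can afford the bundle
`{cx, cout}` (budgets are at least 1), hence `cout` is oversubscribed by at
least `nx/2 > 2α`, so no budgets and allocation can form an `(α,β)`-CEEI at
these prices when `nx > 4α`. -/
theorem not_gadget_underpriced {N M : ℕ} (E : Econ N M) (α β : ℝ) (hα : 0 ≤ α)
    (cx cout : Fin M) (hne : cx ≠ cout) (nx : ℕ)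
    (A : Finset (Fin N)) (hAcard : A.card = nx)
    (hApref : ∀ i ∈ A, E.pref i = [({cx, cout} : Finset (Fin M))])
    (hq : (E.q cout : ℝ) = nx / 2)
    (hnx : (nx : ℝ) > 4 * α)
    (p : Fin M → ℝ) (hunder : p cout < 1 - p cx) :
    ∀ (b : Fin N → ℝ) (x : Fin N → Finset (Fin M)), ¬ IsCEEI E α β p b x := by
  intro b x hC
  have hcost : cost p ({cx, cout} : Finset (Fin M)) = p cx + p cout := by
    simp [cost, Finset.sum_pair hne]
  have hmem : ∀ i ∈ A, cout ∈ x i := by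
    intro i hi
    have haff : cost p ({cx, cout} : Finset (Fin M)) ≤ b i := by
      have := (hC.budget i).1
      rw [hcost]; linarith
    have := hC.alloc i
    rw [Chooses, hApref i hi] at this
    rcases this with ⟨_, h⟩ | ⟨hS, _, _⟩
    · exact absurd haff (h _ (List.mem_singleton_self _))
    · simp only [List.mem_singleton] at hS
      rw [hS]; simp
  have henroll : (nx : ℝ) ≤ (enroll x cout : ℝ) := by
    have : A ⊆ univ.filter fun i => cout ∈ x i := by
      intro i hi; simp [hmem i hi]
    have := Finset.card_le_card this
    rw [hAcard] at this
    exact_mod_cast this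
  have hz : (nx : ℝ) / 2 ≤ zerr E p x cout := by
    unfold zerr
    split
    · rw [hq]; linarith
    · rw [hq]
      have : (nx:ℝ) - (nx:ℝ)/2 ≤ max ((enroll x cout : ℝ) - (nx:ℝ)/2) 0 :=
        le_trans (by linarith) (le_max_left _ _)
      linarith
  have hznn : 0 ≤ zerr E p x cout := le_trans (by positivity) hz
  have hce : zerr E p x cout ≤ clearErr E p x := by
    unfold clearErr
    have h1 : (zerr E p x cout)^2 ≤ ∑ j, (zerr E p x j)^2 :=
      Finset.single_le_sum (f := fun j => (zerr E p x j)^2) (fun j _ => sq_nonneg _) (Finset.mem_univ _)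
    calc zerr E p x cout = Real.sqrt ((zerr E p x cout)^2) := by
          rw [Real.sqrt_sq hznn]
      _ ≤ _ := Real.sqrt_le_sqrt h1
  have := hC.clearing
  linarith
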